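/- For a decomposable graph G, the edge count satisfies |E(G)| = ∑_{C ∈ 𝒞(G)} C(|C|,2) − ∑_{S ∈ 𝒮(G)} C(|S|,2), where the second sum is over the separator multiset of any junction tree of G. -/

import Mathlib

open scoped Classical BigOperators

/-- A graph is decomposable (chordal) if it has no induced cycle of length at least 4. -/
def Chordal {V : Type*} (G : SimpleGraph V) : Prop :=
  ¬ ∃ (n : ℕ) (f : ZMod n ↪ V), 4 ≤ n ∧
      ∀ i j : ZMod n, G.Adj (f i) (f j) ↔ (i = j + 1 ∨ j = i + 1)

/-- `C` is a maximal clique (a "clique" in the terminology of the paper) of `G`. -/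
def MaxClique {V : Type*} (G : SimpleGraph V) (C : Set V) : Prop :=
  G.IsClique C ∧ ∀ D, G.IsClique D → C ⊆ D → C = D

/-- `C` is a maximal complete subset of the subgraph of `G` induced on `A`,
i.e. a clique of `G_A`. -/
def MaxCliqueIn {V : Type*} (G : SimpleGraph V) (A C : Set V) : Prop :=
  C ⊆ A ∧ G.IsClique C ∧ ∀ D, D ⊆ A → G.IsClique D → C ⊆ D → C = D

/-- `(A,B)` is a decomposition of `G`: it covers the vertex set, `A ∩ B` is complete
and `A ∩ B` separates `A \ B` from `B \ A`. -/
def IsDecomposition {V : Type*} (G : SimpleGraph V) (A B : Set V) : Prop :=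
  A ∪ B = Set.univ ∧ G.IsClique (A ∩ B) ∧
    ∀ u ∈ A \ B, ∀ v ∈ B \ A, ∀ p : G.Walk u v, ∃ w ∈ A ∩ B, w ∈ p.support

/-- The graph `G⟨A₁,…,A_k⟩` on `V` that is complete on each member of `𝒜` and
has no other edges. -/
def coverGraph {V : Type*} (𝒜 : Set (Set V)) : SimpleGraph V where
  Adj u v := u ≠ v ∧ ∃ A ∈ 𝒜, u ∈ A ∧ v ∈ A
  symm := ⟨by
    rintro u v ⟨huv, A, hA, hu, hv⟩
    exact ⟨huv.symm, A, hA, hv, hu⟩⟩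
  loopless := ⟨by rintro v ⟨hv, -⟩; exact hv rfl⟩

/-- Total mass that the density `π` puts on a set of graphs. -/
noncomputable def mass {V : Type*} (π : SimpleGraph V → ℝ) (S : Set (SimpleGraph V)) : ℝ :=
  ∑ᶠ G ∈ S, π G

/-- `𝔘*(A,B)`: decomposable graphs for which `(A,B)` is a decomposition and
`A ∩ B` is a clique (maximal complete subgraph) of `G_A`. -/
def Ustar {V : Type*} (A B : Set V) : Set (SimpleGraph V) :=
  {G | Chordal G ∧ IsDecomposition G A B ∧ MaxCliqueIn G A (A ∩ B)}

/-- The weak structural Markov property: for every covering pair `(A,B)`,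
the induced subgraphs `G_A` and `G_B` are independent conditionally on
`G ∈ 𝔘*(A,B)`. -/
def WeaklyStructurallyMarkov {V : Type*} (π : SimpleGraph V → ℝ) : Prop :=
  ∀ A B : Set V, A ∪ B = Set.univ →
    ∀ H₁ ∈ Ustar A B, ∀ H₂ ∈ Ustar A B,
      mass π {G ∈ Ustar A B |
            G.induce A = H₁.induce A ∧ G.induce B = H₂.induce B} *
          mass π (Ustar A B) =
        mass π {G ∈ Ustar A B | G.induce A = H₁.induce A} *
          mass π {G ∈ Ustar A B | G.induce B = H₂.induce B}

/-- `π` is the density of a graph law on the set of decomposable graphs on `V`. -/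
def IsGraphLaw {V : Type*} [Fintype V] (π : SimpleGraph V → ℝ) : Prop :=
  (∀ G, 0 ≤ π G) ∧ (∀ G, ¬ Chordal G → π G = 0) ∧ ∑ᶠ G : SimpleGraph V, π G = 1

/-- `π` has full support on the decomposable graphs. -/
def FullSupport {V : Type*} (π : SimpleGraph V → ℝ) : Prop :=
  ∀ G, Chordal G → 0 < π G

/-- A junction tree for `G`: a tree on the maximal cliques of `G` such that the
cliques containing any fixed vertex form a connected subtree. -/
structure JunctionTree {V : Type*} (G : SimpleGraph V) where
  J : ℕ
  clique : Fin J → Set V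
  clique_inj : Function.Injective clique
  clique_max : ∀ i, MaxClique G (clique i)
  clique_surj : ∀ C, MaxClique G C → ∃ i, clique i = C
  T : SimpleGraph (Fin J)
  isTree : T.IsTree
  junction : ∀ v : V, ((T.induce {i | v ∈ clique i}).Connected)

/-- The separator associated with an (unordered) edge of a junction tree. -/
def JunctionTree.sep {V : Type*} {G : SimpleGraph V} (JT : JunctionTree G) :
    Sym2 (Fin JT.J) → Set V :=
  Sym2.lift ⟨fun i j => JT.clique i ∩ JT.clique j, fun i j => Set.inter_comm _ _⟩

/-- `π` is a clique–separator factorisation law: its density is proportional to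
`∏_C φ_C / ∏_S ψ_S` over the cliques and separators of `G`. -/
def IsCSFLaw {V : Type*} (π : SimpleGraph V → ℝ) : Prop :=
  ∃ (φ ψ : Set V → ℝ) (c : ℝ), (∀ A, 0 < φ A) ∧ (∀ A, 0 < ψ A) ∧ 0 < c ∧
    ∀ G : SimpleGraph V, Chordal G → ∀ JT : JunctionTree G,
      π G = c * (∏ i : Fin JT.J, φ (JT.clique i)) /
        ∏ᶠ e ∈ JT.T.edgeSet, ψ (JT.sep e)

/-- The union of the cliques visited before step `j`. -/
def priorUnion {V : Type*} {J : ℕ} (f : Fin J → Set V) (j : Fin J) : Set V :=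
  ⋃ i ∈ {i : Fin J | i < j}, f i

/-- `f` is a pluperfect ordering of the (maximal) cliques of `G`: at each step the
clique chosen is available and its separator is not a proper subset of the
separator of any other available clique. -/
def PluperfectOrdering {V : Type*} (G : SimpleGraph V) {J : ℕ} (f : Fin J → Set V) : Prop :=
  Function.Injective f ∧ (∀ i, MaxClique G (f i)) ∧ (∀ C, MaxClique G C → ∃ i, f i = C) ∧
  ∀ j : Fin J, (j : ℕ) ≠ 0 →
    (∃ i < j, f j ∩ priorUnion f j ⊆ f i) ∧
    ∀ k : Fin J, j ≤ k → (∃ i < j, f k ∩ priorUnion f j ⊆ f i) →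
      ¬ f j ∩ priorUnion f j ⊂ f k ∩ priorUnion f j


-- two_mul_choose_two
lemma two_mul_choose_two (n : ℕ) : 2 * n.choose 2 = n * (n - 1) := by
  induction n with
  | zero => simp
  | succ m ih =>
    rw [Nat.choose_succ_succ, Nat.choose_one_right, Nat.mul_add, ih]
    cases m with
    | zero => simp
    | succ k =>
      simp only [Nat.succ_sub_one]
      ring

lemma reachable_induce_of_support {ι : Type*} {T : SimpleGraph ι} {S : Set ι} {a b : ι}
    (p : T.Walk a b) (hp : ∀ x ∈ p.support, x ∈ S) (ha : a ∈ S) (hb : b ∈ S) :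
    (T.induce S).Reachable ⟨a, ha⟩ ⟨b, hb⟩ := by
  induction p with
  | nil => exact SimpleGraph.Reachable.refl _
  | @cons u c w h q ih =>
    have hc : c ∈ S := hp c (by simp)
    have hq : ∀ x ∈ q.support, x ∈ S := fun x hx => hp x (by simp [hx])
    have hadj : (T.induce S).Adj ⟨u, ha⟩ ⟨c, hc⟩ := h
    exact hadj.reachable.trans (ih hq hc hb)

lemma isAcyclic_induce {ι : Type*} {T : SimpleGraph ι} (h : T.IsAcyclic) (S : Set ι) :
    (T.induce S).IsAcyclic := by
  intro v c hc
  exact h (c.map (SimpleGraph.Embedding.induce (G := T) S).toHom)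
    ((SimpleGraph.Walk.map_isCycle_iff_of_injective
      (SimpleGraph.Embedding.induce (G := T) S).injective).mpr hc)

lemma subtree_inter {ι : Type*} {T : SimpleGraph ι} (hT : T.IsTree) {S1 S2 : Set ι}
    (h1 : (T.induce S1).Connected) (h2 : (T.induce S2).Connected)
    (hne : (S1 ∩ S2).Nonempty) : (T.induce (S1 ∩ S2)).Connected := by
  have hnon : Nonempty ↥(S1 ∩ S2) := hne.to_subtype
  refine SimpleGraph.Connected.mk ?_
  rintro ⟨x, hx1, hx2⟩ ⟨y, hy1, hy2⟩
  -- get a path in T with support in S1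
  have key : ∀ (S : Set ι), (T.induce S).Connected → ∀ (hx : x ∈ S) (hy : y ∈ S),
      ∃ p : T.Walk x y, p.IsPath ∧ ∀ z ∈ p.support, z ∈ S := by
    intro S hS hx hy
    obtain ⟨w⟩ := hS.preconnected ⟨x, hx⟩ ⟨y, hy⟩
    let w' := w.map (SimpleGraph.Embedding.induce (G := T) S).toHom
    refine ⟨w'.bypass, w'.bypass_isPath, fun z hz => ?_⟩
    have hz' : z ∈ w'.support := w'.support_bypass_subset hz
    rw [SimpleGraph.Walk.support_map] at hz'
    obtain ⟨a, _, rfl⟩ := List.mem_map.mp hz'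
    exact a.2
  obtain ⟨p1, hp1, hs1⟩ := key S1 h1 hx1 hy1
  obtain ⟨p2, hp2, hs2⟩ := key S2 h2 hx2 hy2
  have heq : p1 = p2 := ExistsUnique.unique (hT.existsUnique_path x y) hp1 hp2
  have hsub : ∀ z ∈ p1.support, z ∈ S1 ∩ S2 := fun z hz => ⟨hs1 z hz, hs2 z (heq ▸ hz)⟩
  exact reachable_induce_of_support p1 hsub ⟨hx1, hx2⟩ ⟨hy1, hy2⟩

lemma tree_edges_within {ι : Type*} [Fintype ι] {T : SimpleGraph ι} (hT : T.IsTree)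
    (ES : Finset (Sym2 ι)) (hES : (ES : Set (Sym2 ι)) = T.edgeSet) (S : Set ι)
    (hconn : (T.induce S).Connected) :
    (ES.filter (fun e => ∀ x ∈ e, x ∈ S)).card + 1 = S.ncard := by
  classical
  have hmem : ∀ e, e ∈ ES ↔ e ∈ T.edgeSet := fun e => by
    rw [← hES]; rfl
  have htree : (T.induce S).IsTree := ⟨hconn, isAcyclic_induce hT.IsAcyclic S⟩
  have hcard := htree.card_edgeFinset
  have hbij : ((T.induce S).edgeFinset).card = (ES.filter (fun e => ∀ x ∈ e, x ∈ S)).card := by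
    apply Finset.card_bij (fun e _ => Sym2.map Subtype.val e)
    · intro e he
      revert he
      refine Sym2.ind (fun a b => ?_) e
      intro he
      · simp only [SimpleGraph.mem_edgeFinset, SimpleGraph.mem_edgeSet] at he
        simp only [Finset.mem_filter, Sym2.map_pair_eq, hmem, SimpleGraph.mem_edgeSet]
        refine ⟨he, ?_⟩
        intro x hx
        rw [Sym2.mem_iff] at hx
        rcases hx with rfl | rfl
        · exact a.2
        · exact b.2
    · intro e1 _ e2 _ h
      exact Sym2.map.injective Subtype.val_injective h
    · intro e he
      simp only [Finset.mem_filter, hmem, SimpleGraph.mem_edgeSet] at he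
      revert he
      refine Sym2.ind (fun a b => ?_) e
      intro he
      · obtain ⟨hadj, hall⟩ := he
        have ha : a ∈ S := hall a (by simp)
        have hb : b ∈ S := hall b (by simp)
        refine ⟨s(⟨a, ha⟩, ⟨b, hb⟩), ?_, by simp⟩
        simp only [SimpleGraph.mem_edgeFinset, SimpleGraph.mem_edgeSet]
        exact hadj
  rw [← hbij, hcard, ← Set.toFinset_card, Set.ncard_eq_toFinset_card']

lemma exists_maxClique_supset {V : Type*} [Fintype V] (G : SimpleGraph V) {C : Set V}
    (hC : G.IsClique C) : ∃ D, MaxClique G D ∧ C ⊆ D := by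
  classical
  have hfin : {D : Set V | G.IsClique D ∧ C ⊆ D}.Finite := Set.toFinite _
  obtain ⟨D, hD, hmax⟩ := Set.Finite.exists_maximalFor id _ hfin ⟨C, hC, subset_rfl⟩
  refine ⟨D, ⟨hD.1, fun E hE hDE => ?_⟩, hD.2⟩
  exact le_antisymm hDE (hmax ⟨hE, hD.2.trans hDE⟩ hDE)

lemma sum_pair_indicator {V : Type*} [Fintype V] (A : Set V) :
    (∑ u : V, ∑ v : V, (if u ≠ v ∧ u ∈ A ∧ v ∈ A then (1:ℤ) else 0))
      = 2 * (A.ncard.choose 2) := by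
  classical
  rw [← Finset.sum_product']
  rw [Finset.sum_boole]
  have hfil : (Finset.univ ×ˢ Finset.univ).filter
      (fun p : V × V => p.1 ≠ p.2 ∧ p.1 ∈ A ∧ p.2 ∈ A) = A.toFinset.offDiag := by
    ext p
    simp [Finset.mem_offDiag, and_comm, and_left_comm]
  rw [hfil, Finset.offDiag_card]
  have h1 : A.toFinset.card = A.ncard := (Set.ncard_eq_toFinset_card' A).symm
  rw [h1]
  set n := A.ncard
  have h2 : 2 * n.choose 2 = n * (n - 1) := two_mul_choose_two n
  have h3 : n * n - n = n * (n - 1) := by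
    cases n with
    | zero => simp
    | succ k => simp only [Nat.succ_sub_one]; ring_nf; omega
  rw [h3, ← h2]
  push_cast
  ring



lemma two_mul_edge_count {V : Type*} [Fintype V] (G : SimpleGraph V) :
    (∑ u : V, ∑ v : V, (if G.Adj u v then (1:ℤ) else 0)) = 2 * G.edgeSet.ncard := by
  classical
  have h1 : ∀ u : V, (∑ v : V, (if G.Adj u v then (1:ℤ) else 0)) = (G.degree u : ℤ) := by
    intro u
    rw [Finset.sum_boole]
    congr 1
    rw [SimpleGraph.degree, SimpleGraph.neighborFinset_eq_filter]
  calc (∑ u : V, ∑ v : V, (if G.Adj u v then (1:ℤ) else 0))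
      = ((∑ u : V, G.degree u : ℕ) : ℤ) := by
        rw [Nat.cast_sum]; exact Finset.sum_congr rfl (fun u _ => h1 u)
    _ = ((2 * G.edgeFinset.card : ℕ) : ℤ) := by
        rw [SimpleGraph.sum_degrees_eq_twice_card_edges]
    _ = 2 * G.edgeSet.ncard := by
        rw [Set.ncard_eq_toFinset_card' G.edgeSet]
        push_cast
        rfl

lemma per_pair {V : Type*} [Fintype V] (G : SimpleGraph V) (JT : JunctionTree G)
    (ES : Finset (Sym2 (Fin JT.J))) (hES : (ES : Set (Sym2 (Fin JT.J))) = JT.T.edgeSet)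
    (u v : V) :
    (if G.Adj u v then (1:ℤ) else 0)
      = (∑ i : Fin JT.J, if u ≠ v ∧ u ∈ JT.clique i ∧ v ∈ JT.clique i then (1:ℤ) else 0)
        - (∑ e ∈ ES, if u ≠ v ∧ u ∈ JT.sep e ∧ v ∈ JT.sep e then (1:ℤ) else 0) := by
  classical
  by_cases hne : u = v
  · subst hne
    simp [SimpleGraph.irrefl]
  · set S : Set (Fin JT.J) := {i | u ∈ JT.clique i ∧ v ∈ JT.clique i} with hS
    have hsum1 : (∑ i : Fin JT.J, if u ≠ v ∧ u ∈ JT.clique i ∧ v ∈ JT.clique i then (1:ℤ) else 0)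
        = ((Finset.univ.filter (fun i => i ∈ S)).card : ℤ) := by
      have h : ∀ i : Fin JT.J, (if u ≠ v ∧ u ∈ JT.clique i ∧ v ∈ JT.clique i then (1:ℤ) else 0)
          = (if i ∈ S then (1:ℤ) else 0) := fun i => by
        simp [hS, Set.mem_setOf_eq, hne]
      rw [Finset.sum_congr rfl (fun i _ => h i), Finset.sum_boole]
    have hsum2 : (∑ e ∈ ES, if u ≠ v ∧ u ∈ JT.sep e ∧ v ∈ JT.sep e then (1:ℤ) else 0)
        = ((ES.filter (fun e => ∀ x ∈ e, x ∈ S)).card : ℤ) := by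
      have h : ∀ e : Sym2 (Fin JT.J), (if u ≠ v ∧ u ∈ JT.sep e ∧ v ∈ JT.sep e then (1:ℤ) else 0)
          = (if (∀ x ∈ e, x ∈ S) then (1:ℤ) else 0) := by
        refine Sym2.ind (fun i j => ?_)
        refine if_congr ?_ rfl rfl
        constructor
        · rintro ⟨-, hu, hv⟩ x hx
          have hu' : u ∈ JT.clique i ∩ JT.clique j := hu
          have hv' : v ∈ JT.clique i ∩ JT.clique j := hv
          rcases Sym2.mem_iff.mp hx with rfl | rfl
          · exact ⟨hu'.1, hv'.1⟩
          · exact ⟨hu'.2, hv'.2⟩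
        · intro h
          have hi : i ∈ S := h i (by simp)
          have hj : j ∈ S := h j (by simp)
          have h1 : u ∈ JT.sep s(i, j) := Set.mem_inter hi.1 hj.1
          have h2 : v ∈ JT.sep s(i, j) := Set.mem_inter hi.2 hj.2
          exact ⟨hne, h1, h2⟩
      rw [Finset.sum_congr rfl (fun e _ => h e), Finset.sum_boole]
    rw [hsum1, hsum2]
    by_cases hadj : G.Adj u v
    · rw [if_pos hadj]
      have hCuv : G.IsClique {u, v} := SimpleGraph.isClique_pair.mpr (fun _ => hadj)
      obtain ⟨D, hD, hsub⟩ := exists_maxClique_supset G hCuv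
      obtain ⟨i0, hi0⟩ := JT.clique_surj D hD
      have hi0S : i0 ∈ S := by
        refine ⟨?_, ?_⟩ <;> rw [hi0] <;> exact hsub (by simp)
      have hSeq : S = {i | u ∈ JT.clique i} ∩ {i | v ∈ JT.clique i} := by
        ext i; simp [hS, Set.mem_setOf_eq]
      have hconn : (JT.T.induce S).Connected := by
        rw [hSeq]
        exact subtree_inter JT.isTree (JT.junction u) (JT.junction v)
          ⟨i0, hSeq ▸ hi0S⟩
      have hcount := tree_edges_within JT.isTree ES hES S hconn
      have hcard : (Finset.univ.filter (fun i => i ∈ S)).card = S.ncard := by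
        rw [Set.ncard_eq_toFinset_card']
        congr 1
        ext i
        simp
      rw [hcard]
      have hcount' : (ES.filter (fun e => ∀ x ∈ e, x ∈ S)).card + 1 = S.ncard := by
        convert hcount using 4
      omega
    · rw [if_neg hadj]
      have hSempty : S = ∅ := by
        ext i
        simp only [hS, Set.mem_setOf_eq, Set.mem_empty_iff_false, iff_false, not_and]
        intro hu hv
        exact hadj ((JT.clique_max i).1 hu hv hne)
      have h1 : (Finset.univ.filter (fun i => i ∈ S)).card = 0 := by
        simp [hSempty]
      have h2 : (ES.filter (fun e => ∀ x ∈ e, x ∈ S)).card = 0 := by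
        rw [Finset.card_eq_zero, Finset.filter_eq_empty_iff]
        intro e _ hall
        have hx : e.out.1 ∈ e := Sym2.out_fst_mem e
        have := hall e.out.1 hx
        rw [hSempty] at this
        exact this
      rw [h1, h2]
      norm_num

/-- for a decomposable graph,
`|E(G)| = ∑_{C ∈ 𝒞(G)} C(|C|,2) − ∑_{S ∈ 𝒮(G)} C(|S|,2)`. -/
theorem edge_count_identity {V : Type*} [Fintype V] (G : SimpleGraph V)
    (hG : Chordal G) (JT : JunctionTree G) :
    (G.edgeSet.ncard : ℤ) =
      (∑ i : Fin JT.J, ((JT.clique i).ncard.choose 2 : ℤ)) -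
        ∑ᶠ e ∈ JT.T.edgeSet, ((JT.sep e).ncard.choose 2 : ℤ) := by
  classical
  set ES : Finset (Sym2 (Fin JT.J)) := (Set.toFinite JT.T.edgeSet).toFinset with hESdef
  have hES : (ES : Set (Sym2 (Fin JT.J))) = JT.T.edgeSet := Set.Finite.coe_toFinset _
  have hfin : ∑ᶠ e ∈ JT.T.edgeSet, ((JT.sep e).ncard.choose 2 : ℤ)
      = ∑ e ∈ ES, ((JT.sep e).ncard.choose 2 : ℤ) := by
    rw [← hES, finsum_mem_coe_finset]
  rw [hfin]
  have key : 2 * (G.edgeSet.ncard : ℤ)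
      = 2 * ((∑ i : Fin JT.J, ((JT.clique i).ncard.choose 2 : ℤ))
          - ∑ e ∈ ES, ((JT.sep e).ncard.choose 2 : ℤ)) := by
    rw [← two_mul_edge_count G]
    calc (∑ u : V, ∑ v : V, (if G.Adj u v then (1:ℤ) else 0))
        = ∑ u : V, ∑ v : V,
            ((∑ i : Fin JT.J, if u ≠ v ∧ u ∈ JT.clique i ∧ v ∈ JT.clique i then (1:ℤ) else 0)
              - (∑ e ∈ ES, if u ≠ v ∧ u ∈ JT.sep e ∧ v ∈ JT.sep e then (1:ℤ) else 0)) := by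
          exact Finset.sum_congr rfl (fun u _ => Finset.sum_congr rfl
            (fun v _ => per_pair G JT ES hES u v))
      _ = (∑ u : V, ∑ v : V, ∑ i : Fin JT.J,
              if u ≠ v ∧ u ∈ JT.clique i ∧ v ∈ JT.clique i then (1:ℤ) else 0)
          - (∑ u : V, ∑ v : V, ∑ e ∈ ES,
              if u ≠ v ∧ u ∈ JT.sep e ∧ v ∈ JT.sep e then (1:ℤ) else 0) := by
          simp [Finset.sum_sub_distrib]
      _ = (∑ i : Fin JT.J, ∑ u : V, ∑ v : V,
              if u ≠ v ∧ u ∈ JT.clique i ∧ v ∈ JT.clique i then (1:ℤ) else 0)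
          - (∑ e ∈ ES, ∑ u : V, ∑ v : V,
              if u ≠ v ∧ u ∈ JT.sep e ∧ v ∈ JT.sep e then (1:ℤ) else 0) := by
          congr 1
          · calc (∑ u : V, ∑ v : V, ∑ i : Fin JT.J,
                    if u ≠ v ∧ u ∈ JT.clique i ∧ v ∈ JT.clique i then (1:ℤ) else 0)
                = ∑ u : V, ∑ i : Fin JT.J, ∑ v : V,
                    (if u ≠ v ∧ u ∈ JT.clique i ∧ v ∈ JT.clique i then (1:ℤ) else 0) :=
                  Finset.sum_congr rfl (fun u _ => Finset.sum_comm)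
              _ = ∑ i : Fin JT.J, ∑ u : V, ∑ v : V,
                    (if u ≠ v ∧ u ∈ JT.clique i ∧ v ∈ JT.clique i then (1:ℤ) else 0) :=
                  Finset.sum_comm
          · calc (∑ u : V, ∑ v : V, ∑ e ∈ ES,
                    if u ≠ v ∧ u ∈ JT.sep e ∧ v ∈ JT.sep e then (1:ℤ) else 0)
                = ∑ u : V, ∑ e ∈ ES, ∑ v : V,
                    (if u ≠ v ∧ u ∈ JT.sep e ∧ v ∈ JT.sep e then (1:ℤ) else 0) :=
                  Finset.sum_congr rfl (fun u _ => Finset.sum_comm)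
              _ = ∑ e ∈ ES, ∑ u : V, ∑ v : V,
                    (if u ≠ v ∧ u ∈ JT.sep e ∧ v ∈ JT.sep e then (1:ℤ) else 0) :=
                  Finset.sum_comm
      _ = (∑ i : Fin JT.J, 2 * (((JT.clique i).ncard.choose 2 : ℕ) : ℤ))
          - (∑ e ∈ ES, 2 * (((JT.sep e).ncard.choose 2 : ℕ) : ℤ)) := by
          congr 1
          · exact Finset.sum_congr rfl (fun i _ => sum_pair_indicator (JT.clique i))
          · exact Finset.sum_congr rfl (fun e _ => sum_pair_indicator (JT.sep e))
      _ = 2 * ((∑ i : Fin JT.J, ((JT.clique i).ncard.choose 2 : ℤ))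
          - ∑ e ∈ ES, ((JT.sep e).ncard.choose 2 : ℤ)) := by
          rw [← Finset.mul_sum, ← Finset.mul_sum]
          ring
  linarith [key]
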